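/- Let D be a profinite group and (H_n)_{n≥1} a descending sequence of open subgroups of D (H_{n+1} ⊆ H_n) with intersection H = ⋂_{n≥1} H_n. For a closed subgroup L of D write L^{ab} for the quotient of L by the topological closure of its commutator subgroup. Then the natural homomorphism H^{ab} → lim←_n H_n^{ab}, induced by the inclusions H ⊆ H_n, where the transition maps H_{n+1}^{ab} → H_n^{ab} of the inverse system are induced by the inclusions H_{n+1} ⊆ H_n, is bijective. -/

import Mathlib

section

variable {D : Type*} [Group D] [TopologicalSpace D] [IsTopologicalGroup D]

/-- For a subgroup `L` of a topological group `D`, the quotient `L^{ab}` of `L` by the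
topological closure of its commutator subgroup. -/
abbrev ClosedAbelianization (L : Subgroup D) : Type _ :=
  ↥L ⧸ (commutator ↥L).topologicalClosure

/-- The homomorphism `L'^{ab} → L^{ab}` induced by an inclusion `L' ≤ L` of subgroups. -/
def closedAbelianizationMap {L' L : Subgroup D} (h : L' ≤ L) :
    ClosedAbelianization L' →* ClosedAbelianization L :=
  QuotientGroup.map _ _ (Subgroup.inclusion h) (by
    have hcont : Continuous (Subgroup.inclusion h) :=
      Continuous.subtype_mk continuous_subtype_val _
    refine Subgroup.topologicalClosure_minimal _ ?_ ?_
    · rw [← Subgroup.map_le_iff_le_comap]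
      refine le_trans ?_ (Subgroup.le_topologicalClosure _)
      rw [commutator_def, Subgroup.map_commutator]
      exact Subgroup.commutator_mono le_top le_top
    · rw [Subgroup.coe_comap]
      exact (Subgroup.isClosed_topologicalClosure _).preimage hcont)

end


open Pointwise in
private lemma mem_topologicalClosure_commutator_iff {D : Type*} [Group D] [TopologicalSpace D]
    [IsTopologicalGroup D] (L : Subgroup D) (x : ↥L) :
    x ∈ (commutator ↥L).topologicalClosure ↔ (x : D) ∈ closure (↑⁅L, L⁆ : Set D) := by
  have h1 : Subgroup.map L.subtype (commutator ↥L) = ⁅L, L⁆ := by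
    rw [commutator_def, Subgroup.map_commutator]
    congr 1 <;>
      rw [← MonoidHom.range_eq_map, Subgroup.range_subtype]
  have h2 : (Subtype.val '' ((commutator ↥L : Subgroup ↥L) : Set ↥L)) = (↑⁅L, L⁆ : Set D) := by
    rw [← h1, Subgroup.coe_map, Subgroup.coe_subtype]
  rw [← SetLike.mem_coe, Subgroup.topologicalClosure_coe, closure_subtype, h2]

open Pointwise in
private lemma closure_subset_mul {D : Type*} [Group D] [TopologicalSpace D] [IsTopologicalGroup D]
    (N : Subgroup D) (hN : IsOpen (N : Set D)) (S : Set D) :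
    closure S ⊆ S * (N : Set D) := by
  intro x hx
  have hO : IsOpen ((x⁻¹ * ·) ⁻¹' (N : Set D)) := hN.preimage (continuous_mul_left x⁻¹)
  have hxm : x ∈ (x⁻¹ * ·) ⁻¹' (N : Set D) := by simp [one_mem]
  obtain ⟨s, hs1, hs2⟩ := (mem_closure_iff.mp hx) _ hO hxm
  refine ⟨s, hs2, s⁻¹ * x, ?_, by group⟩
  have : x⁻¹ * s ∈ N := hs1
  simpa using inv_mem this

private lemma exists_openNormal_smul_subset {D : Type*} [Group D] [TopologicalSpace D]
    [IsTopologicalGroup D] [CompactSpace D] [T2Space D] [TotallyDisconnectedSpace D]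
    {U : Set D} (hU : IsOpen U) {x : D} (hx : x ∈ U) :
    ∃ N : Subgroup D, N.Normal ∧ IsOpen (N : Set D) ∧ ∀ ν ∈ N, x * ν ∈ U := by
  have hU' : IsOpen ((x * ·) ⁻¹' U) := hU.preimage (continuous_mul_left x)
  have h1 : (1 : D) ∈ (x * ·) ⁻¹' U := by simpa
  obtain ⟨W, hW, h1W, hWU⟩ := compact_exists_isClopen_in_isOpen hU' h1
  obtain ⟨N, hN⟩ := IsTopologicalGroup.exist_openNormalSubgroup_sub_clopen_nhds_of_one hW h1W
  exact ⟨N.toSubgroup, N.isNormal', N.toOpenSubgroup.isOpen, fun ν hν => hWU (hN hν)⟩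

open Pointwise in
private lemma inj_core {D : Type*} [Group D] [TopologicalSpace D] [IsTopologicalGroup D]
    [CompactSpace D] [T2Space D] [TotallyDisconnectedSpace D]
    (H : ℕ → Subgroup D) (hHopen : ∀ n, IsOpen (H n : Set D))
    (hHdesc : ∀ n, H (n + 1) ≤ H n) {x : D}
    (hx : ∀ n, x ∈ closure (↑⁅H n, H n⁆ : Set D)) :
    x ∈ closure (↑⁅⨅ n, H n, ⨅ n, H n⁆ : Set D) := by
  set Hinf := ⨅ n, H n with hHinf
  set K := ⁅Hinf, Hinf⁆ with hK
  rw [mem_closure_iff]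
  intro O hO hxO
  obtain ⟨N, hNnorm, hNopen, hNsub⟩ := exists_openNormal_smul_subset hO hxO
  haveI := hNnorm
  have hHNopen : IsOpen ((Hinf ⊔ N : Subgroup D) : Set D) :=
    Subgroup.isOpen_mono le_sup_right hNopen
  obtain ⟨n, hn⟩ : ∃ n, H n ≤ Hinf ⊔ N := by
    by_contra hcon
    push_neg at hcon
    have hne : ∀ n, ((H n : Set D) ∩ (((Hinf ⊔ N : Subgroup D) : Set D))ᶜ).Nonempty := by
      intro n
      obtain ⟨d, hd1, hd2⟩ := SetLike.not_le_iff_exists.mp (hcon n)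
      exact ⟨d, hd1, hd2⟩
    obtain ⟨d, hd⟩ := IsCompact.nonempty_iInter_of_sequence_nonempty_isCompact_isClosed
      (fun n => (H n : Set D) ∩ (((Hinf ⊔ N : Subgroup D) : Set D))ᶜ)
      (fun n => Set.inter_subset_inter_left _ (hHdesc n))
      hne
      ((((H 0).isClosed_of_isOpen (hHopen 0)).inter hHNopen.isClosed_compl).isCompact)
      (fun n => ((H n).isClosed_of_isOpen (hHopen n)).inter hHNopen.isClosed_compl)
    simp only [Set.mem_iInter, Set.mem_inter_iff] at hd
    have hdinf : d ∈ Hinf := by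
      rw [hHinf, Subgroup.mem_iInf]
      exact fun n => (hd n).1
    exact (hd 0).2 (SetLike.mem_coe.mpr (le_sup_left (a := Hinf) (b := N) hdinf))
  have hcomm : ⁅H n, H n⁆ ≤ K ⊔ N := by
    refine (Subgroup.commutator_mono hn hn).trans ?_
    have h1 : Subgroup.map (QuotientGroup.mk' N) (Hinf ⊔ N) =
        Subgroup.map (QuotientGroup.mk' N) Hinf := by
      rw [Subgroup.map_sup]
      have : Subgroup.map (QuotientGroup.mk' N) N = ⊥ := by
        rw [Subgroup.map_eq_bot_iff, QuotientGroup.ker_mk']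
      rw [this, sup_bot_eq]
    calc ⁅Hinf ⊔ N, Hinf ⊔ N⁆
        ≤ Subgroup.comap (QuotientGroup.mk' N)
            (Subgroup.map (QuotientGroup.mk' N) ⁅Hinf ⊔ N, Hinf ⊔ N⁆) :=
          Subgroup.le_comap_map _ _
      _ = Subgroup.comap (QuotientGroup.mk' N) (Subgroup.map (QuotientGroup.mk' N) K) := by
          rw [hK, Subgroup.map_commutator, Subgroup.map_commutator, h1]
      _ = K ⊔ N := by rw [Subgroup.comap_map_eq, QuotientGroup.ker_mk']
  have hx1 : x ∈ (↑⁅H n, H n⁆ : Set D) * (N : Set D) := closure_subset_mul N hNopen _ (hx n)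
  have hx2 : x ∈ ((K ⊔ N : Subgroup D) : Set D) := by
    obtain ⟨a, ha, ν, hν, rfl⟩ := hx1
    exact mul_mem (hcomm ha) (le_sup_right (a := K) hν)
  rw [Subgroup.mul_normal K N] at hx2
  obtain ⟨k, hk, ν, hν, hkν⟩ := hx2
  refine ⟨k, ?_, hk⟩
  have : k = x * ν⁻¹ := by rw [← hkν]; group
  rw [this]
  exact hNsub ν⁻¹ (inv_mem hν)

private lemma closedAbelianizationMap_mk {D : Type*} [Group D] [TopologicalSpace D]
    [IsTopologicalGroup D] {L' L : Subgroup D} (h : L' ≤ L) (a : ↥L') :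
    closedAbelianizationMap h (QuotientGroup.mk a) = QuotientGroup.mk (Subgroup.inclusion h a) :=
  rfl

/-- Let `D` be a profinite group and `(H n)` a descending sequence of open
subgroups of `D` with intersection `H = ⨅ n, H n`. The natural homomorphism
`H^{ab} → lim← H_n^{ab}` induced by the inclusions `H ≤ H n` is bijective: the map from
`H^{ab}` to the product of the `H_n^{ab}` is injective, and its range is exactly the inverse
limit, i.e. the set of families compatible with the transition maps `H_{n+1}^{ab} → H_n^{ab}`
induced by the inclusions `H (n+1) ≤ H n`. -/
theorem closedAbelianization_bijective_to_inverse_limit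
    {D : Type*} [Group D] [TopologicalSpace D] [IsTopologicalGroup D]
    [CompactSpace D] [T2Space D] [TotallyDisconnectedSpace D]
    (H : ℕ → Subgroup D) (hHopen : ∀ n, IsOpen (H n : Set D))
    (hHdesc : ∀ n, H (n + 1) ≤ H n) :
    Function.Injective
      (fun x : ClosedAbelianization (⨅ n, H n) =>
        fun n => closedAbelianizationMap (iInf_le H n) x) ∧
    Set.range
      (fun x : ClosedAbelianization (⨅ n, H n) =>
        fun n => closedAbelianizationMap (iInf_le H n) x) =
      {f : ∀ n, ClosedAbelianization (H n) |
        ∀ n, closedAbelianizationMap (hHdesc n) (f (n + 1)) = f n} := by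
  have lemA := @mem_topologicalClosure_commutator_iff D _ _ _
  constructor
  · intro xq yq hxy
    obtain ⟨a, rfl⟩ := QuotientGroup.mk_surjective xq
    obtain ⟨b, rfl⟩ := QuotientGroup.mk_surjective yq
    have hn : ∀ n, ((a⁻¹ * b : ↥(⨅ n, H n)) : D) ∈ closure (↑⁅H n, H n⁆ : Set D) := by
      intro n
      have h1 := congrFun hxy n
      simp only [closedAbelianizationMap_mk, QuotientGroup.eq] at h1
      have h2 := (lemA _ _).mp h1
      simpa using h2
    have h3 := inj_core H hHopen hHdesc hn
    rw [QuotientGroup.eq]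
    exact (lemA _ _).mpr (by simpa using h3)
  · ext f
    simp only [Set.mem_range, Set.mem_setOf_eq]
    constructor
    · rintro ⟨xq, rfl⟩ n
      obtain ⟨a, rfl⟩ := QuotientGroup.mk_surjective xq
      rfl
    · intro hf
      choose g hgf using fun n => QuotientGroup.mk_surjective (f n)
      have compat : ∀ n, ((g n : D))⁻¹ * (g (n + 1) : D) ∈ closure (↑⁅H n, H n⁆ : Set D) := by
        intro n
        have h1 := hf n
        rw [← hgf n, ← hgf (n + 1), closedAbelianizationMap_mk, QuotientGroup.eq] at h1
        have h2 := (lemA _ _).mp h1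
        have h3 : ((Subgroup.inclusion (hHdesc n) (g (n + 1)))⁻¹ * g n : D)
            ∈ closure (↑⁅H n, H n⁆ : Set D) := by simpa using h2
        rw [← Subgroup.topologicalClosure_coe, SetLike.mem_coe] at h3 ⊢
        simpa using inv_mem h3
      set C : ℕ → Set D := fun n =>
        (H n : Set D) ∩ {d | (g n : D)⁻¹ * d ∈ closure (↑⁅H n, H n⁆ : Set D)} with hC
      have hCclosed : ∀ n, IsClosed (C n) := fun n =>
        ((H n).isClosed_of_isOpen (hHopen n)).inter
          (isClosed_closure.preimage (continuous_mul_left _))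
      have hCne : ∀ n, (C n).Nonempty := fun n =>
        ⟨g n, (g n).2, by simpa using subset_closure (one_mem ⁅H n, H n⁆)⟩
      have hCdesc : ∀ n, C (n + 1) ⊆ C n := by
        intro n d hd
        refine ⟨hHdesc n hd.1, ?_⟩
        have h4 : (g (n + 1) : D)⁻¹ * d ∈ closure (↑⁅H n, H n⁆ : Set D) :=
          closure_mono (SetLike.coe_subset_coe.mpr
            (Subgroup.commutator_mono (hHdesc n) (hHdesc n))) hd.2
        have h5 : (g n : D)⁻¹ * d = ((g n : D)⁻¹ * (g (n + 1) : D)) * ((g (n + 1) : D)⁻¹ * d) := by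
          group
        show (g n : D)⁻¹ * d ∈ closure (↑⁅H n, H n⁆ : Set D)
        rw [← Subgroup.topologicalClosure_coe, SetLike.mem_coe] at h4 ⊢
        rw [h5]
        exact mul_mem (by
          rw [← SetLike.mem_coe, Subgroup.topologicalClosure_coe]; exact compat n) h4
      obtain ⟨x, hx⟩ := IsCompact.nonempty_iInter_of_sequence_nonempty_isCompact_isClosed
        C hCdesc hCne ((hCclosed 0).isCompact) hCclosed
      simp only [Set.mem_iInter] at hx
      have hxinf : x ∈ ⨅ n, H n := Subgroup.mem_iInf.mpr fun n => (hx n).1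
      refine ⟨QuotientGroup.mk ⟨x, hxinf⟩, ?_⟩
      funext n
      rw [← hgf n]
      show closedAbelianizationMap (iInf_le H n) (QuotientGroup.mk ⟨x, hxinf⟩)
          = QuotientGroup.mk (g n)
      rw [closedAbelianizationMap_mk, QuotientGroup.eq]
      refine (lemA _ _).mpr ?_
      have h7 : (g n : D)⁻¹ * x ∈ ⁅H n, H n⁆.topologicalClosure := by
        rw [← SetLike.mem_coe, Subgroup.topologicalClosure_coe]
        exact (hx n).2
      rw [← Subgroup.topologicalClosure_coe]
      refine SetLike.mem_coe.mpr ?_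
      simpa using inv_mem h7
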